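/- Let (R, m) be a Noetherian local domain with m ≠ 0 satisfying condition (H), and let I be a proper ideal of R having finite Łojasiewicz exponent. Then m·I has finite Łojasiewicz exponent and 𝓛₀(m·I) = 𝓛₀(I) + 1. -/

import Mathlib

open Finset IsLocalRing

/-- The set of elements integral over an ideal `I`: `x` is integral over `I` if it satisfies
an equation `x ^ k + c 1 * x ^ (k-1) + ⋯ + c k = 0` with `c i ∈ I ^ i`. -/
def integralClosureIdeal {R : Type*} [CommRing R] (I : Ideal R) : Set R :=
  {x | ∃ k : ℕ, 1 ≤ k ∧ ∃ c : ℕ → R, (∀ i, 1 ≤ i → i ≤ k → c i ∈ I ^ i) ∧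
    x ^ k + ∑ i ∈ Finset.Icc 1 k, c i * x ^ (k - i) = 0}

/-- `Λ(I)`: the set of rationals `r/s` (as real numbers) with `r, s` positive integers such that
`m ^ r` is contained in the integral closure of `I ^ s`. -/
def Lambda (R : Type*) [CommRing R] [IsLocalRing R] (I : Ideal R) : Set ℝ :=
  {x | ∃ r s : ℕ, 0 < r ∧ 0 < s ∧
    ((maximalIdeal R ^ r : Ideal R) : Set R) ⊆ integralClosureIdeal (I ^ s) ∧
    x = (r : ℝ) / (s : ℝ)}

/-- The Łojasiewicz exponent `𝓛₀(I)`, the infimum of `Λ(I)`. -/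
noncomputable def Loj (R : Type*) [CommRing R] [IsLocalRing R] (I : Ideal R) : ℝ :=
  sInf (Lambda R I)
section Aux

variable {R : Type*} [CommRing R]

lemma iclAuxPowLe {I J : Ideal R} (h : I ≤ J) : ∀ n : ℕ, I ^ n ≤ J ^ n
  | 0 => by simp
  | n+1 => by rw [pow_succ, pow_succ]; exact Ideal.mul_mono (iclAuxPowLe h n) h

lemma icl_mono {J K : Ideal R} (h : J ≤ K) :
    integralClosureIdeal J ⊆ integralClosureIdeal K := by
  rintro x ⟨k, hk, c, hc, he⟩
  exact ⟨k, hk, c, fun i h1 h2 => iclAuxPowLe h i (hc i h1 h2), he⟩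

/-- Determinant trick: in a Noetherian domain, if `M ≠ ⊥` and `z • M ⊆ J * M`,
then `z` is integral over `J`. -/
lemma mem_icl_of_mul_mem [IsDomain R] [IsNoetherianRing R] (J M : Ideal R)
    (hM : M ≠ ⊥) (z : R) (hz : ∀ b ∈ M, z * b ∈ J * M) :
    z ∈ integralClosureIdeal J := by
  have hfg : M.FG := IsNoetherian.noetherian M
  have : Module.Finite R M := Module.Finite.iff_fg.mpr hfg
  obtain ⟨p, hmonic, -, hcoeff, heval⟩ :=
    LinearMap.exists_monic_and_coeff_mem_pow_and_aeval_eq_zero_of_range_le_smul R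
      (algebraMap R (Module.End R M) z) J (by
        rintro x ⟨y, rfl⟩
        rw [Module.algebraMap_end_apply, Submodule.mem_smul_top_iff]
        have hcoe : ((z • y : M) : R) = z * (y : R) := rfl
        rw [hcoe, Ideal.smul_eq_mul]
        exact hz y y.2)
  obtain ⟨m0, hm0M, hm0⟩ := (Submodule.ne_bot_iff M).mp hM
  have hev : p.eval z = 0 := by
    have h1 : Polynomial.aeval (algebraMap R (Module.End R M) z) p
        = algebraMap R (Module.End R M) (p.eval z) :=
      Polynomial.aeval_algebraMap_apply_eq_algebraMap_eval z p
    have h2 : (algebraMap R (Module.End R M) (p.eval z)) ⟨m0, hm0M⟩ = 0 := by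
      rw [← h1, heval]; rfl
    have h3 : p.eval z * m0 = 0 := by
      have := congrArg (Subtype.val) h2
      simpa [Module.algebraMap_end_apply] using this
    exact (mul_eq_zero.mp h3).resolve_right hm0
  set k := p.natDegree with hkdef
  have hk1 : 1 ≤ k := by
    by_contra h
    have hk0 : k = 0 := by omega
    have hp1 : p = 1 := hmonic.natDegree_eq_zero.mp hk0
    rw [hp1, Polynomial.eval_one] at hev
    exact one_ne_zero hev
  refine ⟨k, hk1, fun i => p.coeff (k - i), fun i h1 h2 => ?_, ?_⟩
  · have := hcoeff (k - i)
    rwa [Nat.sub_sub_self h2] at this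
  · rw [← hev, Polynomial.eval_eq_sum_range, Finset.sum_range_succ,
      hmonic.coeff_natDegree, one_mul, add_comm]
    congr 1
    refine (Finset.sum_nbij' (fun i => k - i) (fun j => k - j) ?_ ?_ ?_ ?_ ?_)
    · intro a ha; simp only [Finset.mem_Icc] at ha; simp only [Finset.mem_range]; omega
    · intro a ha; simp only [Finset.mem_range] at ha; simp only [Finset.mem_Icc]; omega
    · intro a ha; simp only [Finset.mem_Icc] at ha; show k - (k - a) = a; omega
    · intro a ha; simp only [Finset.mem_range] at ha; show k - (k - a) = a; omega
    · intro a ha; rfl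

/-- Converse: each element of the integral closure admits a nonzero "test module". -/
lemma exists_module_of_mem_icl [IsDomain R] (J : Ideal R) (z : R)
    (hz : z ∈ integralClosureIdeal J) :
    ∃ M : Ideal R, M ≠ ⊥ ∧ ∀ b ∈ M, z * b ∈ J * M := by
  by_cases hz0 : z = 0
  · refine ⟨⊤, top_ne_bot, fun b hb => by simp [hz0]⟩
  obtain ⟨k, hk, c, hc, he⟩ := hz
  set M : Ideal R := ⨆ j : Fin k, J ^ (k - 1 - (j : ℕ)) * Ideal.span {z ^ (j : ℕ)} with hMdef
  have hcomp : ∀ j : Fin k, J ^ (k - 1 - (j : ℕ)) * Ideal.span {z ^ (j : ℕ)} ≤ M := fun j =>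
    hMdef ▸ le_iSup (fun j : Fin k => J ^ (k - 1 - (j : ℕ)) * Ideal.span {z ^ (j : ℕ)}) j
  have hMne : M ≠ ⊥ := by
    rw [Submodule.ne_bot_iff]
    refine ⟨z ^ (k - 1), ?_, pow_ne_zero _ hz0⟩
    have : z ^ (k-1) ∈ J ^ (k - 1 - (k-1)) * Ideal.span {z ^ (k-1)} := by
      rw [Nat.sub_self, pow_zero, Ideal.one_eq_top, Ideal.top_mul]
      exact Ideal.subset_span rfl
    exact hcomp ⟨k-1, by omega⟩ this
  refine ⟨M, hMne, fun b hb => ?_⟩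
  have key : Ideal.span {z} * M ≤ J * M := by
    have hdistrib : Ideal.span {z} * M = ⨆ j : Fin k, Ideal.span {z} *
        (J ^ (k - 1 - (j : ℕ)) * Ideal.span {z ^ (j : ℕ)}) := by
      rw [hMdef, ← Ideal.smul_eq_mul, Submodule.smul_iSup]
      simp only [Ideal.smul_eq_mul]
    rw [hdistrib]
    refine iSup_le fun j => ?_
    have hcalc : Ideal.span {z} * (J ^ (k - 1 - (j : ℕ)) * Ideal.span {z ^ (j : ℕ)})
        = J ^ (k - 1 - (j : ℕ)) * Ideal.span {z ^ ((j : ℕ) + 1)} := by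
      rw [mul_left_comm, Ideal.span_singleton_mul_span_singleton, ← pow_succ']
    rw [hcalc]
    rcases lt_or_eq_of_le (Nat.le_sub_one_of_lt j.2) with hj | hj
    · -- j < k - 1
      have hexp : k - 1 - (j : ℕ) = (k - 1 - ((j : ℕ) + 1)) + 1 := by omega
      rw [hexp, pow_succ, mul_comm (J ^ (k - 1 - ((j:ℕ)+1))) J, mul_assoc]
      exact Ideal.mul_mono_right (hcomp ⟨(j:ℕ)+1, by omega⟩)
    · -- j = k - 1
      have hexp : k - 1 - (j : ℕ) = 0 := by omega
      have hjk : (j : ℕ) + 1 = k := by omega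
      rw [hexp, pow_zero, Ideal.one_eq_top, Ideal.top_mul, hjk, Ideal.span_singleton_le_iff_mem]
      -- z ^ k ∈ J * M
      have hzk : z ^ k = -∑ i ∈ Finset.Icc 1 k, c i * z ^ (k - i) := by
        linear_combination he
      rw [hzk]
      refine neg_mem (Submodule.sum_mem _ fun i hi => ?_)
      simp only [Finset.mem_Icc] at hi
      have h1 : c i * z ^ (k - i) ∈ J ^ i * Ideal.span {z ^ (k - i)} :=
        Ideal.mul_mem_mul (hc i hi.1 hi.2) (Ideal.subset_span rfl)
      have h2 : J ^ i * Ideal.span {z ^ (k - i)} ≤ J * M := by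
        have hpow : J ^ i = J * J ^ (i - 1) := by
          conv_lhs => rw [show i = (i-1)+1 from by omega]
          rw [pow_succ, mul_comm]
        rw [hpow, mul_assoc]
        refine Ideal.mul_mono_right ?_
        have hkk : k - 1 - (k - i) = i - 1 := by omega
        have hidx := hcomp ⟨k - i, by omega⟩
        simp only [hkk] at hidx
        exact hidx
      exact h2 h1
  exact key (Ideal.mul_mem_mul (Ideal.subset_span rfl) hb)

end Aux

section Aux2

variable {R : Type*} [CommRing R]

/-- Uniform test module for an ideal contained in an integral closure. -/
lemma exists_module_of_subset_icl [IsDomain R] [IsNoetherianRing R] (K J : Ideal R)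
    (h : (K : Set R) ⊆ integralClosureIdeal J) :
    ∃ M : Ideal R, M ≠ ⊥ ∧ ∀ a ∈ K, ∀ b ∈ M, a * b ∈ J * M := by
  obtain ⟨S, hS⟩ := IsNoetherian.noetherian K
  have hmem : ∀ x : S, (x : R) ∈ integralClosureIdeal J := fun x =>
    h (by rw [← hS]; exact Ideal.subset_span x.2)
  choose Mf hMf1 hMf2 using fun x : S => exists_module_of_mem_icl J (x : R) (hmem x)
  classical
  set M : Ideal R := ∏ x ∈ Finset.univ (α := S), Mf x with hMdef
  have hMne : M ≠ ⊥ := by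
    rw [hMdef, ← Ideal.zero_eq_bot, Finset.prod_ne_zero_iff]
    intro x _
    rw [Ideal.zero_eq_bot]
    exact hMf1 x
  have hgen : ∀ x : S, Ideal.span {(x : R)} * M ≤ J * M := by
    intro x
    have hsplit : M = Mf x * ∏ y ∈ Finset.univ.erase x, Mf y :=
      (Finset.mul_prod_erase Finset.univ Mf (Finset.mem_univ x)).symm
    have h1 : Ideal.span {(x : R)} * Mf x ≤ J * Mf x :=
      Ideal.span_singleton_mul_le_iff.mpr (hMf2 x)
    calc Ideal.span {(x : R)} * M
        = (Ideal.span {(x : R)} * Mf x) * ∏ y ∈ Finset.univ.erase x, Mf y := by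
          rw [hsplit, mul_assoc]
      _ ≤ (J * Mf x) * ∏ y ∈ Finset.univ.erase x, Mf y :=
          Ideal.mul_mono_left h1
      _ = J * M := by rw [hsplit, mul_assoc]
  refine ⟨M, hMne, fun a ha b hb => ?_⟩
  rw [← hS] at ha
  induction ha using Submodule.span_induction with
  | mem x hx =>
      exact hgen ⟨x, hx⟩ (Ideal.mul_mem_mul (Ideal.subset_span rfl) hb)
  | zero => simpa using (J * M).zero_mem
  | add u v _ _ hu hv => rw [add_mul]; exact (J * M).add_mem hu hv
  | smul r u _ hu => rw [smul_eq_mul, mul_assoc]; exact (J * M).smul_mem r hu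

end Aux2

section Main

open IsLocalRing

variable {R : Type*} [CommRing R] [IsDomain R] [IsNoetherianRing R] [IsLocalRing R]

lemma forward_step (I : Ideal R) {r s : ℕ}
    (h : ((maximalIdeal R ^ r : Ideal R) : Set R) ⊆ integralClosureIdeal (I ^ s)) :
    ((maximalIdeal R ^ (r + s) : Ideal R) : Set R) ⊆
      integralClosureIdeal ((maximalIdeal R * I) ^ s) := by
  obtain ⟨M, hMne, hMmul⟩ := exists_module_of_subset_icl _ _ h
  intro z hz
  apply mem_icl_of_mul_mem _ M hMne
  intro b hb
  have hz' : z ∈ maximalIdeal R ^ s * maximalIdeal R ^ r := by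
    rwa [← pow_add, add_comm s r]
  have hid : (maximalIdeal R * I) ^ s * M
      = maximalIdeal R ^ s * (I ^ s * M) := by rw [mul_pow]; ring
  rw [hid]
  refine Submodule.mul_induction_on hz' (fun a ha c hc => ?_) (fun x y hx hy => ?_)
  · rw [mul_assoc]
    exact Ideal.mul_mem_mul ha (hMmul c hc b hb)
  · rw [add_mul]
    exact Submodule.add_mem _ hx hy

lemma backward_step (hm : maximalIdeal R ≠ ⊥)
    (hH : ∀ r s : ℕ, 0 < r → 0 < s →
      ((maximalIdeal R ^ r : Ideal R) : Set R) ⊆ integralClosureIdeal (maximalIdeal R ^ s) →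
      s ≤ r)
    {I : Ideal R} (hIm : I ≤ maximalIdeal R) {r s : ℕ} (hr : 0 < r) (hs : 0 < s)
    (h : ((maximalIdeal R ^ r : Ideal R) : Set R) ⊆
      integralClosureIdeal ((maximalIdeal R * I) ^ s)) :
    2 * s ≤ r ∧ ((maximalIdeal R ^ (r - s) : Ideal R) : Set R) ⊆
      integralClosureIdeal (I ^ s) := by
  have hle : (maximalIdeal R * I) ^ s ≤ maximalIdeal R ^ (2 * s) := by
    rw [pow_mul]
    refine iclAuxPowLe ?_ s
    rw [pow_two]
    exact Ideal.mul_mono_right hIm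
  have h2s : 2 * s ≤ r :=
    hH r (2 * s) hr (by omega) (h.trans (icl_mono hle))
  refine ⟨h2s, ?_⟩
  obtain ⟨M, hMne, hMmul⟩ := exists_module_of_subset_icl _ _ h
  have hms : (maximalIdeal R ^ s : Ideal R) ≠ ⊥ := by
    rw [← Ideal.zero_eq_bot]
    exact pow_ne_zero s (by rwa [Ideal.zero_eq_bot])
  have hM'ne : maximalIdeal R ^ s * M ≠ ⊥ := by
    rw [Ne, Ideal.mul_eq_bot]
    tauto
  intro z hz
  apply mem_icl_of_mul_mem _ _ hM'ne
  intro b' hb'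
  have hid : I ^ s * (maximalIdeal R ^ s * M) = (maximalIdeal R * I) ^ s * M := by
    rw [mul_pow]; ring
  rw [hid]
  refine Submodule.mul_induction_on hb' (fun a ha c hc => ?_) (fun x y hx hy => ?_)
  · rw [← mul_assoc]
    have hza : z * a ∈ (maximalIdeal R : Ideal R) ^ r := by
      have := Ideal.mul_mem_mul hz ha
      rwa [← pow_add, Nat.sub_add_cancel (by omega : s ≤ r)] at this
    exact hMmul (z * a) hza c hc
  · rw [mul_add]
    exact Submodule.add_mem _ hx hy

end Main

theorem loj_maximalIdeal_mul
    {R : Type*} [CommRing R] [IsDomain R] [IsNoetherianRing R] [IsLocalRing R]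
    (hm : maximalIdeal R ≠ ⊥)
    (hH : ∀ r s : ℕ, 0 < r → 0 < s →
      ((maximalIdeal R ^ r : Ideal R) : Set R) ⊆ integralClosureIdeal (maximalIdeal R ^ s) →
      s ≤ r)
    (I : Ideal R) (hI : I ≠ ⊤) (hIfin : (Lambda R I).Nonempty) :
    (Lambda R (maximalIdeal R * I)).Nonempty ∧
      Loj R (maximalIdeal R * I) = Loj R I + 1 := by
  have hIm : I ≤ maximalIdeal R := le_maximalIdeal hI
  have fwd : ∀ x ∈ Lambda R I, x + 1 ∈ Lambda R (maximalIdeal R * I) := by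
    rintro x ⟨r, s, hr, hs, hsub, rfl⟩
    refine ⟨r + s, s, by omega, hs, forward_step I hsub, ?_⟩
    have hs0 : (s : ℝ) ≠ 0 := Nat.cast_ne_zero.mpr (by omega)
    push_cast
    field_simp
  have bkwd : ∀ y ∈ Lambda R (maximalIdeal R * I), ∃ x ∈ Lambda R I, y = x + 1 := by
    rintro y ⟨r, s, hr, hs, hsub, rfl⟩
    obtain ⟨h2s, hsub'⟩ := backward_step hm hH hIm hr hs hsub
    refine ⟨((r - s : ℕ) : ℝ) / (s : ℝ), ⟨r - s, s, by omega, hs, hsub', rfl⟩, ?_⟩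
    have hs0 : (s : ℝ) ≠ 0 := Nat.cast_ne_zero.mpr (by omega)
    rw [Nat.cast_sub (by omega : s ≤ r)]
    field_simp
    ring
  have hbdd : ∀ J : Ideal R, BddBelow (Lambda R J) := by
    intro J
    refine ⟨0, ?_⟩
    rintro x ⟨r, s, _, _, _, rfl⟩
    positivity
  obtain ⟨x0, hx0⟩ := hIfin
  have hNE : (Lambda R (maximalIdeal R * I)).Nonempty := ⟨x0 + 1, fwd x0 hx0⟩
  refine ⟨hNE, le_antisymm ?_ ?_⟩
  · have h2 : Loj R (maximalIdeal R * I) - 1 ≤ sInf (Lambda R I) := by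
      refine le_csInf ⟨x0, hx0⟩ fun x hx => ?_
      have := csInf_le (hbdd _) (fwd x hx)
      unfold Loj
      linarith
    unfold Loj at h2 ⊢
    linarith
  · refine le_csInf hNE fun y hy => ?_
    obtain ⟨x, hx, rfl⟩ := bkwd y hy
    have := csInf_le (hbdd I) hx
    unfold Loj
    linarith
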